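/- arXiv:2110.12966 — 2 statements merged into one kernel-verified Lean document; each statement's English description precedes it below -/
import Mathlib

section
/- Let p ≥ 1 and let s be a natural number with 1 ≤ s < p. For θ ∈ ℝ^p let P_{θ,1} := N(θ, 1_p 1_pᵀ) (the equicorrelated Gaussian model with correlation γ = 1). Then for every ε > 0 the minimax testing risk R(ε) := inf_φ { P_{0,1}(φ = 1) + sup_{θ ∈ Θ(p,s,ε)} P_{θ,1}(φ = 0) } equals 0, where the infimum runs over measurable φ : ℝ^p → {0,1} and Θ(p,s,ε) := {θ ∈ ℝ^p : ‖θ‖ ≥ ε and ‖θ‖₀ ≤ s}. Moreover the test φ*(x) := 1{x − x̄ 1_p ≠ 0}, with x̄ := p^{-1} Σ_{i=1}^p x_i, has P_{0,1}(φ* = 1) = 0 and sup_{θ ∈ Θ(p,s,ε)} P_{θ,1}(φ* = 0) = 0. -/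
open MeasureTheory ProbabilityTheory Matrix Finset
open scoped Classical

noncomputable section

/-- The standard Gaussian measure on `Fin p → ℝ`. -/
def stdGaussianPi (p : ℕ) : Measure (Fin p → ℝ) :=
  Measure.pi fun _ => gaussianReal 0 1

/-- The Gaussian measure `N(θ, S)` on `ℝ^p` with mean `θ` and positive semidefinite
covariance matrix `S`, realized as the pushforward of the standard Gaussian under
`x ↦ θ + √S x` (junk value `0` if `S` is not positive semidefinite). -/
def gaussianPi {p : ℕ} (θ : Fin p → ℝ) (S : Matrix (Fin p) (Fin p) ℝ) :
    Measure (Fin p → ℝ) :=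
  if h : S.PosSemidef then (stdGaussianPi p).map (fun x => θ + ((h.1.eigenvectorUnitary : Matrix (Fin p) (Fin p) ℝ) *
      diagonal (fun i => Real.sqrt (h.1.eigenvalues i)) *
      (star h.1.eigenvectorUnitary : Matrix (Fin p) (Fin p) ℝ)).mulVec x) else 0

/-- `‖θ‖₀`, the number of nonzero coordinates. -/
def sparsity {p : ℕ} (θ : Fin p → ℝ) : ℕ := Set.ncard {i | θ i ≠ 0}

/-- The Euclidean norm on `Fin p → ℝ`. -/
def l2norm {p : ℕ} (θ : Fin p → ℝ) : ℝ := Real.sqrt (∑ i, θ i ^ 2)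

/-- Minimax testing risk: infimum over measurable tests `φ : ℝ^p → {0,1}` of the
type I error under `P 0` plus the worst-case type II error over the alternative `T`. -/
def minimaxRisk {p : ℕ} (P : (Fin p → ℝ) → Measure (Fin p → ℝ))
    (T : Set (Fin p → ℝ)) : ℝ :=
  ⨅ φ : {f : (Fin p → ℝ) → Bool // Measurable f},
    ((P 0 {x | φ.1 x = true}).toReal + ⨆ θ ∈ T, (P θ {x | φ.1 x = false}).toReal)

def Smat (p : ℕ) : Matrix (Fin p) (Fin p) ℝ := Matrix.of fun _ _ => 1
def Amat (p : ℕ) : Matrix (Fin p) (Fin p) ℝ := Matrix.of fun _ _ => (Real.sqrt p)⁻¹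

lemma hS_psd (p : ℕ) : (Smat p).PosSemidef := by
  rw [posSemidef_iff_dotProduct_mulVec]
  constructor
  · ext i j; simp [Smat, Matrix.conjTranspose_apply]
  · intro x
    have h : dotProduct (star x) ((Smat p) *ᵥ x) = (∑ j, x j) * (∑ j, x j) := by
      simp [dotProduct, Matrix.mulVec, Smat, ← Finset.sum_mul]
    rw [h]; exact mul_self_nonneg _

lemma hA_psd (p : ℕ) : (Amat p).PosSemidef := by
  rw [posSemidef_iff_dotProduct_mulVec]
  constructor
  · ext i j; simp [Amat, Matrix.conjTranspose_apply]
  · intro x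
    have h : dotProduct (star x) ((Amat p) *ᵥ x)
        = (Real.sqrt p)⁻¹ * ((∑ j, x j) * (∑ j, x j)) := by
      simp only [dotProduct, Matrix.mulVec, Amat, Matrix.of_apply, Pi.star_apply,
        star_trivial, Finset.mul_sum, Finset.sum_mul]
      rw [Finset.sum_comm]
      congr 1; ext j; congr 1; ext i; ring
    rw [h]
    exact mul_nonneg (inv_nonneg.2 (Real.sqrt_nonneg _)) (mul_self_nonneg _)

lemma hA_sq (p : ℕ) (hp : 1 ≤ p) : (Amat p) ^ 2 = Smat p := by
  have hp0 : (0:ℝ) < p := by exact_mod_cast hp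
  ext i j
  simp [pow_two, Matrix.mul_apply, Amat, Smat, Finset.sum_const, nsmul_eq_mul]
  rw [← mul_inv, Real.mul_self_sqrt hp0.le, mul_inv_cancel₀ hp0.ne']

open scoped MatrixOrder in
lemma sqrt_eq (p : ℕ) (hp : 1 ≤ p) : ((hS_psd p).1.eigenvectorUnitary : Matrix (Fin p) (Fin p) ℝ) *
      diagonal (fun i => Real.sqrt ((hS_psd p).1.eigenvalues i)) *
      (star (hS_psd p).1.eigenvectorUnitary : Matrix (Fin p) (Fin p) ℝ) = Amat p := by
  have h := CFC.sqrt_unique (a := Smat p) (b := Amat p) (by rw [← sq]; exact hA_sq p hp)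
    (hA_psd p).nonneg
  rw [← h, CFC.sqrt_eq_cfc, cfc_nnreal_eq_real _ _ (hS_psd p).nonneg, (hS_psd p).1.cfc_eq]
  have hmax : ∀ i, max ((hS_psd p).1.eigenvalues i) 0 = (hS_psd p).1.eigenvalues i :=
    fun i => max_eq_left ((hS_psd p).eigenvalues_nonneg i)
  simp [IsHermitian.cfc, Function.comp_def, hmax]

lemma Fmeas (p : ℕ) (θ : Fin p → ℝ) :
    Measurable fun x : Fin p → ℝ => θ + (Amat p) *ᵥ x := by
  apply Measurable.add measurable_const
  exact ((Amat p).mulVecLin.continuous_of_finiteDimensional).measurable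

/-- the residual after subtracting the mean of `θ + A x` depends only on `θ`. -/
lemma key (p : ℕ) (hp : 1 ≤ p) (θ x : Fin p → ℝ) :
    (fun i => (θ + (Amat p) *ᵥ x) i - (∑ j, (θ + (Amat p) *ᵥ x) j) / p)
      = fun i => θ i - (∑ j, θ j) / p := by
  have hp0 : (p:ℝ) ≠ 0 := by positivity
  have hmv : ∀ i, ((Amat p) *ᵥ x) i = (Real.sqrt p)⁻¹ * ∑ j, x j := by
    intro i; simp [Matrix.mulVec, Amat, dotProduct, Finset.mul_sum]
  funext i
  simp only [Pi.add_apply, hmv, Finset.sum_add_distrib, Finset.sum_const,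
    Finset.card_univ, Fintype.card_fin, nsmul_eq_mul]
  field_simp
  ring

theorem perfect_correlation_sparse_case
    (p s : ℕ) (hp : 1 ≤ p) (hs1 : 1 ≤ s) (hs2 : s < p) (ε : ℝ) (hε : 0 < ε) :
    (let P : (Fin p → ℝ) → Measure (Fin p → ℝ) := fun θ =>
      gaussianPi θ (Matrix.of fun _ _ => (1 : ℝ))
    let Θ : Set (Fin p → ℝ) := {θ | ε ≤ l2norm θ ∧ sparsity θ ≤ s}
    minimaxRisk P Θ = 0 ∧
      (P 0 {x | (fun i => x i - (∑ j, x j) / p) ≠ 0}).toReal = 0 ∧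
      (⨆ θ ∈ Θ, (P θ {x | (fun i => x i - (∑ j, x j) / p) = 0}).toReal) = 0) := by
  intro P Θ
  haveI : Nonempty {f : (Fin p → ℝ) → Bool // Measurable f} :=
    ⟨⟨fun _ => true, measurable_const⟩⟩
  -- the measurable set where the residual vanishes
  set g : (Fin p → ℝ) → (Fin p → ℝ) := fun x => fun i => x i - (∑ j, x j) / p with hg
  have hgmeas : Measurable g := by
    apply measurable_pi_lambda
    intro i
    exact (measurable_pi_apply i).sub
      ((Finset.measurable_sum _ fun j _ => measurable_pi_apply j).div_const _)
  have hE : MeasurableSet {x : Fin p → ℝ | g x = 0} :=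
    measurableSet_eq_fun hgmeas measurable_const
  have hEc : MeasurableSet {x : Fin p → ℝ | g x ≠ 0} := by
    have h : {x : Fin p → ℝ | g x ≠ 0} = {x | g x = 0}ᶜ := rfl
    rw [h]; exact hE.compl
  -- formula for P θ on measurable sets
  have hP : ∀ (θ : Fin p → ℝ) (E : Set (Fin p → ℝ)), MeasurableSet E →
      P θ E = stdGaussianPi p ((fun x => θ + (Amat p) *ᵥ x) ⁻¹' E) := by
    intro θ E hEm
    show gaussianPi θ (Matrix.of fun _ _ => (1 : ℝ)) E = _
    have hSdef : (Matrix.of fun _ _ => (1 : ℝ) : Matrix (Fin p) (Fin p) ℝ) = Smat p := rfl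
    rw [hSdef, gaussianPi, dif_pos (hS_psd p), sqrt_eq p hp,
      Measure.map_apply (Fmeas p θ) hEm]
  have hgF : ∀ (θ x : Fin p → ℝ),
      g (θ + (Amat p) *ᵥ x) = fun i => θ i - (∑ j, θ j) / p :=
    fun θ x => key p hp θ x
  -- type I error of the residual test is 0
  have hI : P 0 {x | g x ≠ 0} = 0 := by
    rw [hP 0 _ hEc]
    have hpre : ((fun x => (0 : Fin p → ℝ) + (Amat p) *ᵥ x) ⁻¹' {x | g x ≠ 0}) = ∅ := by
      ext x
      simp only [Set.mem_preimage, Set.mem_setOf_eq, Set.mem_empty_iff_false, iff_false,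
        not_not, hgF]
      funext i
      simp
    rw [hpre, measure_empty]
  -- type II error is 0 for every θ in the alternative
  have hII : ∀ θ ∈ Θ, P θ {x | g x = 0} = 0 := by
    intro θ hθ
    rw [hP θ _ hE]
    have hpre : ((fun x => θ + (Amat p) *ᵥ x) ⁻¹' {x | g x = 0}) = ∅ := by
      ext x
      simp only [Set.mem_preimage, Set.mem_setOf_eq, Set.mem_empty_iff_false, iff_false,
        hgF]
      intro hcontra
      have hconst : ∀ i, θ i = (∑ j, θ j) / p := by
        intro i
        exact sub_eq_zero.mp (congrFun hcontra i)
      have hθ0 : θ ≠ 0 := by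
        intro h
        rw [h] at hθ
        have : ε ≤ 0 := by simpa [l2norm] using hθ.1
        linarith
      obtain ⟨i0, hi0⟩ : ∃ i, θ i ≠ 0 := by
        by_contra h
        push_neg at h
        exact hθ0 (funext h)
      have hall : ∀ i, θ i ≠ 0 := by
        intro i
        rw [hconst i, ← hconst i0]
        exact hi0
      have hsp : sparsity θ = p := by
        have huniv : {i | θ i ≠ 0} = Set.univ := Set.eq_univ_of_forall hall
        simp [sparsity, huniv, Set.ncard_univ]
      have h2 := hθ.2
      rw [hsp] at h2
      omega
    rw [hpre, measure_empty]
  -- the sup of type II errors is 0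
  have hsup : (⨆ θ ∈ Θ, (P θ {x | g x = 0}).toReal) = 0 := by
    apply le_antisymm
    · apply Real.iSup_le _ le_rfl
      intro θ
      apply Real.iSup_le _ le_rfl
      intro hθ
      rw [hII θ hθ]
      simp
    · exact Real.iSup_nonneg fun θ => Real.iSup_nonneg fun _ => ENNReal.toReal_nonneg
  have hclaim2 : (P 0 {x | (fun i => x i - (∑ j, x j) / p) ≠ (0 : Fin p → ℝ)}).toReal = 0 := by
    show (P 0 {x | g x ≠ 0}).toReal = 0
    rw [hI]; simp
  have hclaim3 : (⨆ θ ∈ Θ, (P θ {x | (fun i => x i - (∑ j, x j) / p)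
      = (0 : Fin p → ℝ)}).toReal) = 0 := hsup
  refine ⟨?_, hclaim2, hclaim3⟩
  -- minimax risk is 0
  have hnonneg : ∀ φ : {f : (Fin p → ℝ) → Bool // Measurable f},
      0 ≤ (P 0 {x | φ.1 x = true}).toReal + ⨆ θ ∈ Θ, (P θ {x | φ.1 x = false}).toReal :=
    fun φ => add_nonneg ENNReal.toReal_nonneg
      (Real.iSup_nonneg fun θ => Real.iSup_nonneg fun _ => ENNReal.toReal_nonneg)
  apply le_antisymm
  · -- use the residual test
    set φstar : (Fin p → ℝ) → Bool := fun x => if g x = 0 then false else true with hφ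
    have hφmeas : Measurable φstar :=
      Measurable.ite hE measurable_const measurable_const
    have h1 : {x | φstar x = true} = {x | g x ≠ 0} := by
      ext x; by_cases h : g x = 0 <;> simp [φstar, h]
    have h2 : {x | φstar x = false} = {x | g x = 0} := by
      ext x; by_cases h : g x = 0 <;> simp [φstar, h]
    refine ciInf_le_of_le ⟨0, ?_⟩ ⟨φstar, hφmeas⟩ ?_
    · rintro y ⟨φ, rfl⟩
      exact hnonneg φ
    · rw [h1, h2, hI, hsup]
      simp
  · exact le_ciInf hnonneg

end
end

section
/- Let p ≥ 1, let v ∈ ℝ^p with ‖v‖ = √p, and for θ ∈ ℝ^p let P_{θ,1,v} := N(θ, v vᵀ) (the rank-one correlation model with γ = 1). Let 1 ≤ s ≤ p and define R(ε) := inf_φ { P_{0,1,v}(φ = 1) + sup_{θ ∈ Θ(p,s,ε)} P_{θ,1,v}(φ = 0) } over measurable φ : ℝ^p → {0,1}, where Θ(p,s,ε) := {θ ∈ ℝ^p : ‖θ‖ ≥ ε and ‖θ‖₀ ≤ s}. Then: (a) if s < ‖v‖₀ then R(ε) = 0 for every ε > 0; and (b) if s ≥ ‖v‖₀ then for every η ∈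 (0,1) there exist constants C_η > 0 and c_η > 0 depending only on η such that R(C√p) ≤ η for all C > C_η and R(c√p) ≥ 1 − η for all 0 < c < c_η. -/
open MeasureTheory ProbabilityTheory Matrix Finset
open scoped Classical

noncomputable section

/-! ### Auxiliary lemmas -/

open scoped ENNReal NNReal

section Aux

lemma gpdf_le_one (m x : ℝ) : gaussianPDFReal m 1 x ≤ 1 := by
  rw [gaussianPDFReal_def]
  have h1 : (1:ℝ) ≤ Real.sqrt (2 * Real.pi * (1:ℝ≥0)) := by
    rw [show ((1:ℝ≥0):ℝ) = 1 by norm_num, mul_one]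
    rw [show (1:ℝ) = Real.sqrt 1 by simp]
    apply Real.sqrt_le_sqrt
    nlinarith [Real.pi_gt_three]
  have h2 : Real.exp (-(x - m) ^ 2 / (2 * (1:ℝ≥0))) ≤ 1 := by
    rw [Real.exp_le_one_iff]
    have : (0:ℝ) ≤ (x-m)^2 := sq_nonneg _
    push_cast
    nlinarith
  calc (Real.sqrt (2 * Real.pi * (1:ℝ≥0)))⁻¹ * Real.exp (-(x - m) ^ 2 / (2 * (1:ℝ≥0)))
      ≤ 1 * 1 := by
        apply mul_le_mul _ h2 (Real.exp_nonneg _) zero_le_one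
        rw [inv_le_one_iff₀]; right; exact h1
    _ = 1 := by ring

lemma gpdf_comp {t : ℝ} (ht : 0 < t) {x : ℝ} (hx : t/2 ≤ x) :
    gaussianPDF 0 1 x ≤ gaussianPDF t 1 x := by
  apply ENNReal.ofReal_le_ofReal
  rw [gaussianPDFReal_def, gaussianPDFReal_def]
  apply mul_le_mul_of_nonneg_left _ (by positivity)
  apply Real.exp_le_exp.2
  have : ((1:ℝ≥0):ℝ) = 1 := by norm_num
  rw [this]
  nlinarith

lemma gpdf_comp' {t : ℝ} (ht : 0 < t) {x : ℝ} (hx : x ≤ t/2) :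
    gaussianPDF t 1 x ≤ gaussianPDF 0 1 x := by
  apply ENNReal.ofReal_le_ofReal
  rw [gaussianPDFReal_def, gaussianPDFReal_def]
  apply mul_le_mul_of_nonneg_left _ (by positivity)
  apply Real.exp_le_exp.2
  have : ((1:ℝ≥0):ℝ) = 1 := by norm_num
  rw [this]
  nlinarith

lemma gauss_Ico (a b : ℝ) : gaussianReal 0 1 (Set.Ico a b) ≤ ENNReal.ofReal (b - a) := by
  rw [gaussianReal_apply 0 one_ne_zero]
  calc ∫⁻ x in Set.Ico a b, gaussianPDF 0 1 x
      ≤ ∫⁻ _ in Set.Ico a b, 1 := by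
        apply setLIntegral_mono measurable_const
        intro x _
        exact le_trans (ENNReal.ofReal_le_ofReal (gpdf_le_one 0 x)) (by simp)
    _ = volume (Set.Ico a b) := by rw [setLIntegral_const, one_mul]
    _ = ENNReal.ofReal (b - a) := by rw [Real.volume_Ico]

lemma gauss_shift_set (t : ℝ) {B : Set ℝ} (hB : MeasurableSet B) :
    gaussianReal t 1 B = gaussianReal 0 1 {x | x + t ∈ B} := by
  have := gaussianReal_map_add_const (μ := 0) (v := 1) t
  rw [zero_add] at this
  rw [← this, Measure.map_apply (measurable_add_const t) hB]
  rfl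

lemma gauss_shift_core {t : ℝ} (ht : 0 < t) {B : Set ℝ} (hB : MeasurableSet B) :
    gaussianReal 0 1 B ≤ gaussianReal t 1 B + ENNReal.ofReal t := by
  set γ := gaussianReal 0 1 with hγ
  set γt := gaussianReal t 1 with hγt
  have hone : (1:ℝ≥0) ≠ 0 := one_ne_zero
  have happ : ∀ (m : ℝ) (S : Set ℝ), gaussianReal m 1 S = ∫⁻ x in S, gaussianPDF m 1 x :=
    fun m S => gaussianReal_apply m hone S
  have hsplit : γ B = γ (B ∩ Set.Iio (t/2)) + γ (B \ Set.Iio (t/2)) :=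
    (measure_inter_add_diff B measurableSet_Iio).symm
  have hsplit' : γt (B ∩ Set.Iio (t/2)) + γt (B \ Set.Iio (t/2)) = γt B :=
    measure_inter_add_diff B measurableSet_Iio
  have hup : γ (B \ Set.Iio (t/2)) ≤ γt (B \ Set.Iio (t/2)) := by
    rw [happ, happ]
    apply setLIntegral_mono (measurable_gaussianPDF t 1)
    intro x hx
    exact gpdf_comp ht (not_lt.1 hx.2)
  have hlow : γ (B ∩ Set.Iio (t/2)) ≤ γt (B ∩ Set.Iio (t/2)) + ENNReal.ofReal t := by
    have key : γ (Set.Iio (t/2)) ≤ γt (Set.Iio (t/2)) + ENNReal.ofReal t := by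
      have h1 : γt (Set.Iio (t/2)) = γ (Set.Iio (-(t/2))) := by
        rw [hγt, gauss_shift_set t measurableSet_Iio]
        congr 1
        ext x
        simp only [Set.mem_setOf_eq, Set.mem_Iio]
        constructor <;> intro h <;> linarith
      have h2 : Set.Iio (t/2) ⊆ Set.Iio (-(t/2)) ∪ Set.Ico (-(t/2)) (t/2) := by
        intro x hx
        rcases lt_or_ge x (-(t/2)) with h | h
        · exact Or.inl h
        · exact Or.inr ⟨h, hx⟩
      calc γ (Set.Iio (t/2)) ≤ γ (Set.Iio (-(t/2))) + γ (Set.Ico (-(t/2)) (t/2)) :=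
            le_trans (measure_mono h2) (measure_union_le _ _)
        _ ≤ γt (Set.Iio (t/2)) + ENNReal.ofReal t := by
            rw [h1]
            apply add_le_add_right
            refine le_trans (gauss_Ico _ _) (ENNReal.ofReal_le_ofReal (by linarith))
    rw [happ, happ]
    have hmono : ∀ x ∈ B ∩ Set.Iio (t/2), gaussianPDF 0 1 x
        ≤ gaussianPDF t 1 x + (gaussianPDF 0 1 x - gaussianPDF t 1 x) :=
      fun x _ => le_add_tsub
    calc ∫⁻ x in B ∩ Set.Iio (t/2), gaussianPDF 0 1 x
        ≤ ∫⁻ x in B ∩ Set.Iio (t/2), (gaussianPDF t 1 x + (gaussianPDF 0 1 x - gaussianPDF t 1 x)) := setLIntegral_mono ((measurable_gaussianPDF t 1).add ((measurable_gaussianPDF 0 1).sub (measurable_gaussianPDF t 1))) hmono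
      _ = (∫⁻ x in B ∩ Set.Iio (t/2), gaussianPDF t 1 x)
            + ∫⁻ x in B ∩ Set.Iio (t/2), (gaussianPDF 0 1 x - gaussianPDF t 1 x) :=
          lintegral_add_right _ ((measurable_gaussianPDF 0 1).sub (measurable_gaussianPDF t 1))
      _ ≤ (∫⁻ x in B ∩ Set.Iio (t/2), gaussianPDF t 1 x) + ENNReal.ofReal t := by
          apply add_le_add_right
          calc ∫⁻ x in B ∩ Set.Iio (t/2), (gaussianPDF 0 1 x - gaussianPDF t 1 x)
              ≤ ∫⁻ x in Set.Iio (t/2), (gaussianPDF 0 1 x - gaussianPDF t 1 x) :=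
                lintegral_mono_set Set.inter_subset_right
            _ = γ (Set.Iio (t/2)) - γt (Set.Iio (t/2)) := by
                rw [happ, happ]
                apply lintegral_sub (measurable_gaussianPDF t 1)
                · refine ne_of_lt (lt_of_le_of_lt ?_ (by simp : (1:ℝ≥0∞) < ⊤))
                  rw [← happ]
                  exact prob_le_one
                · filter_upwards [ae_restrict_mem measurableSet_Iio] with x hx
                  exact gpdf_comp' ht (le_of_lt hx)
            _ ≤ ENNReal.ofReal t := by
                rw [tsub_le_iff_right, add_comm]
                exact key
  calc γ B = γ (B ∩ Set.Iio (t/2)) + γ (B \ Set.Iio (t/2)) := hsplit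
    _ ≤ (γt (B ∩ Set.Iio (t/2)) + ENNReal.ofReal t) + γt (B \ Set.Iio (t/2)) :=
        add_le_add hlow hup
    _ = γt B + ENNReal.ofReal t := by rw [add_right_comm, hsplit']

lemma gauss_neg {S : Set ℝ} (hS : MeasurableSet S) :
    gaussianReal 0 1 {x | -x ∈ S} = gaussianReal 0 1 S := by
  have h1 : Measure.map (fun x => -1 * x) (gaussianReal 0 1) = gaussianReal 0 1 := by
    rw [gaussianReal_map_const_mul (μ := 0) (v := 1) (-1)]
    norm_num
  have h2 := Measure.map_apply (measurable_const_mul (-1 : ℝ)) hS (μ := gaussianReal 0 1)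
  rw [h1] at h2
  rw [h2]
  congr 1
  ext x
  simp [Set.mem_preimage]

lemma gauss_shiftA (t : ℝ) {B : Set ℝ} (hB : MeasurableSet B) :
    gaussianReal 0 1 B ≤ gaussianReal 0 1 {x | x + t ∈ B} + ENNReal.ofReal |t| := by
  rcases lt_trichotomy t 0 with hneg | rfl | hpos
  · have hB' : MeasurableSet {x : ℝ | -x ∈ B} := measurable_neg hB
    have e1 : gaussianReal 0 1 B = gaussianReal 0 1 {x | -x ∈ B} := (gauss_neg hB).symm
    have core := gauss_shift_core (t := -t) (by linarith) hB'
    have hBt : MeasurableSet {y : ℝ | y + t ∈ B} := (measurable_add_const t) hB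
    have e2 : gaussianReal (-t) 1 {x | -x ∈ B} = gaussianReal 0 1 {y | y + t ∈ B} := by
      rw [gauss_shift_set (-t) hB']
      have : {x : ℝ | x + -t ∈ {x : ℝ | -x ∈ B}} = {x : ℝ | -x ∈ {y : ℝ | y + t ∈ B}} := by
        ext x; simp only [Set.mem_setOf_eq]; ring_nf
      rw [this, gauss_neg hBt]
    rw [e1, abs_of_neg hneg]
    calc gaussianReal 0 1 {x | -x ∈ B}
        ≤ gaussianReal (-t) 1 {x | -x ∈ B} + ENNReal.ofReal (-t) := core
      _ = gaussianReal 0 1 {y | y + t ∈ B} + ENNReal.ofReal (-t) := by rw [e2]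
  · simp only [add_zero, abs_zero, ENNReal.ofReal_zero]
    simpa using le_add_right (le_refl (gaussianReal 0 1 B))
  · rw [abs_of_pos hpos, ← gauss_shift_set t hB]
    exact gauss_shift_core hpos hB

lemma stdGaussianPi_shift : ∀ (n : ℕ) (w : Fin n → ℝ) (A : Set (Fin n → ℝ)),
    MeasurableSet A →
    stdGaussianPi n A ≤ stdGaussianPi n {x | x + w ∈ A} + ENNReal.ofReal (∑ i, |w i|) := by
  intro n
  induction n with
  | zero =>
    intro w A hA
    have hxw : ∀ x : Fin 0 → ℝ, x + w = x := fun x => funext fun i => i.elim0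
    have : {x : Fin 0 → ℝ | x + w ∈ A} = A := by ext x; rw [Set.mem_setOf_eq, hxw x]
    rw [this]
    exact le_add_right le_rfl
  | succ n ih =>
    intro w A hA
    set γ : Measure ℝ := gaussianReal 0 1 with hγdef
    set ν : Measure (Fin n → ℝ) := stdGaussianPi n with hνdef
    have hνprob : IsProbabilityMeasure ν := by
      rw [hνdef]; unfold stdGaussianPi; infer_instance
    set e := MeasurableEquiv.piFinSuccAbove (fun _ : Fin (n+1) => ℝ) 0 with hedef
    have mp : MeasurePreserving e (stdGaussianPi (n+1)) (γ.prod ν) :=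
      measurePreserving_piFinSuccAbove (fun _ : Fin (n+1) => gaussianReal 0 1) 0
    have mps := MeasurePreserving.symm e mp
    set tw := Fin.tail w with htwdef
    have esymm_add : ∀ z : ℝ × (Fin n → ℝ), e.symm (z + (w 0, tw)) = e.symm z + w := by
      intro z
      rw [hedef]
      simp only [MeasurableEquiv.piFinSuccAbove_symm_apply, Fin.insertNth_zero']
      funext j
      refine Fin.cases ?_ (fun i => ?_) j
      · simp
      · simp [htwdef, Fin.tail]
    set S := e.symm ⁻¹' A with hSdef
    have hS : MeasurableSet S := e.symm.measurable hA
    set S₂ : Set (ℝ × (Fin n → ℝ)) := {z | (z.1, z.2 + tw) ∈ S} with hS2def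
    have hS₂ : MeasurableSet S₂ := by
      have : Measurable fun z : ℝ × (Fin n → ℝ) => (z.1, z.2 + tw) := by fun_prop
      exact this hS
    set S₃ : Set (ℝ × (Fin n → ℝ)) := {z | (z.1 + w 0, z.2 + tw) ∈ S} with hS3def
    have hS₃ : MeasurableSet S₃ := by
      have : Measurable fun z : ℝ × (Fin n → ℝ) => (z.1 + w 0, z.2 + tw) := by fun_prop
      exact this hS
    have hA' : MeasurableSet {x : Fin (n+1) → ℝ | x + w ∈ A} := by
      have : Measurable fun x : Fin (n+1) → ℝ => x + w := by fun_prop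
      exact this hA
    have h0 : stdGaussianPi (n+1) A = (γ.prod ν) S :=
      (mps.measure_preimage hA.nullMeasurableSet).symm
    have h3 : (γ.prod ν) S₃ = stdGaussianPi (n+1) {x | x + w ∈ A} := by
      have hs3 : S₃ = e.symm ⁻¹' {x | x + w ∈ A} := by
        ext z
        simp only [hS3def, Set.mem_setOf_eq, Set.mem_preimage, hSdef]
        have : ((z.1 + w 0, z.2 + tw) : ℝ × (Fin n → ℝ)) = z + (w 0, tw) := rfl
        rw [this, esymm_add z]
      rw [hs3]
      exact mps.measure_preimage hA'.nullMeasurableSet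
    have stepA : (γ.prod ν) S ≤ (γ.prod ν) S₂ + ENNReal.ofReal (∑ j, |tw j|) := by
      rw [Measure.prod_apply hS, Measure.prod_apply hS₂]
      calc ∫⁻ x, ν (Prod.mk x ⁻¹' S) ∂γ
          ≤ ∫⁻ x, (ν (Prod.mk x ⁻¹' S₂) + ENNReal.ofReal (∑ j, |tw j|)) ∂γ := by
            apply lintegral_mono
            intro x
            exact ih tw (Prod.mk x ⁻¹' S) (measurable_prodMk_left hS)
        _ = (∫⁻ x, ν (Prod.mk x ⁻¹' S₂) ∂γ) + ENNReal.ofReal (∑ j, |tw j|) := by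
            rw [lintegral_add_right _ measurable_const, lintegral_const, measure_univ, mul_one]
    have stepB : (γ.prod ν) S₂ ≤ (γ.prod ν) S₃ + ENNReal.ofReal |w 0| := by
      rw [Measure.prod_apply_symm hS₂, Measure.prod_apply_symm hS₃]
      calc ∫⁻ y, γ ((fun x => (x, y)) ⁻¹' S₂) ∂ν
          ≤ ∫⁻ y, (γ ((fun x => (x, y)) ⁻¹' S₃) + ENNReal.ofReal |w 0|) ∂ν := by
            apply lintegral_mono
            intro y
            exact gauss_shiftA (w 0) (measurable_prodMk_right hS₂)
        _ = (∫⁻ y, γ ((fun x => (x, y)) ⁻¹' S₃) ∂ν) + ENNReal.ofReal |w 0| := by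
            rw [lintegral_add_right _ measurable_const, lintegral_const, measure_univ, mul_one]
    have hsum : ∑ i, |w i| = |w 0| + ∑ j, |tw j| := by
      rw [Fin.sum_univ_succ]
      rfl
    calc stdGaussianPi (n+1) A = (γ.prod ν) S := h0
      _ ≤ (γ.prod ν) S₂ + ENNReal.ofReal (∑ j, |tw j|) := stepA
      _ ≤ ((γ.prod ν) S₃ + ENNReal.ofReal |w 0|) + ENNReal.ofReal (∑ j, |tw j|) :=
          add_le_add_left stepB _
      _ = (γ.prod ν) S₃ + ENNReal.ofReal (∑ i, |w i|) := by
          rw [add_assoc, ← ENNReal.ofReal_add (abs_nonneg _)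
            (Finset.sum_nonneg fun j _ => abs_nonneg _), ← hsum]
      _ = stdGaussianPi (n+1) {x | x + w ∈ A} + ENNReal.ofReal (∑ i, |w i|) := by rw [h3]

lemma vecMulVec_mulVec' {p : ℕ} (u x : Fin p → ℝ) :
    (vecMulVec u u).mulVec x = (u ⬝ᵥ x) • u := by
  funext i
  simp only [Matrix.mulVec, vecMulVec_apply, dotProduct, Pi.smul_apply, smul_eq_mul]
  rw [Finset.sum_mul]
  exact Finset.sum_congr rfl fun j _ => by ring

lemma psd_vecMulVec {p : ℕ} (u : Fin p → ℝ) : (vecMulVec u u).PosSemidef := by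
  simpa using posSemidef_vecMulVec_self_star u

lemma smul_vecMulVec {p : ℕ} (v : Fin p → ℝ) {c : ℝ} (hc : 0 ≤ c) :
    c • vecMulVec v v = vecMulVec ((Real.sqrt c) • v) ((Real.sqrt c) • v) := by
  ext i j
  simp only [Matrix.smul_apply, vecMulVec_apply, Pi.smul_apply, smul_eq_mul]
  have h : Real.sqrt c * Real.sqrt c = c := Real.mul_self_sqrt hc
  calc c * (v i * v j) = (Real.sqrt c * Real.sqrt c) * (v i * v j) := by rw [h]
    _ = Real.sqrt c * v i * (Real.sqrt c * v j) := by ring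

lemma sqrt_vecMulVec {p : ℕ} (hp : 1 ≤ p) (v : Fin p → ℝ) (hvv : v ⬝ᵥ v = p)
    (h : (vecMulVec v v).PosSemidef) :
    ((Real.sqrt p)⁻¹ • vecMulVec v v) = (h.1.eigenvectorUnitary : Matrix (Fin p) (Fin p) ℝ) *
      diagonal (fun i => Real.sqrt (h.1.eigenvalues i)) *
      (star h.1.eigenvectorUnitary : Matrix (Fin p) (Fin p) ℝ) := by
  have hppos : (0:ℝ) < p := by exact_mod_cast Nat.pos_of_ne_zero (by omega)
  have hsp : Real.sqrt p * Real.sqrt p = p := Real.mul_self_sqrt (le_of_lt hppos)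
  have hsppos : (0:ℝ) < Real.sqrt p := Real.sqrt_pos.2 hppos
  have hmul : vecMulVec v v * vecMulVec v v = (v ⬝ᵥ v) • vecMulVec v v := by
    ext i j
    simp only [Matrix.mul_apply, vecMulVec_apply, Matrix.smul_apply, smul_eq_mul, dotProduct]
    rw [Finset.sum_mul]
    exact Finset.sum_congr rfl fun k _ => by ring
  have key : ∀ i, Real.sqrt (h.1.eigenvalues i) = (Real.sqrt p)⁻¹ * h.1.eigenvalues i := by
    intro i
    have he := h.1.mulVec_eigenvectorBasis i
    have hne : (⇑(h.1.eigenvectorBasis i) : Fin p → ℝ) ≠ 0 := by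
      intro h0
      apply h.1.eigenvectorBasis.orthonormal.ne_zero i
      ext j
      simpa using congrFun h0 j
    have h2 : vecMulVec v v *ᵥ (vecMulVec v v *ᵥ ⇑(h.1.eigenvectorBasis i))
        = (p:ℝ) • (vecMulVec v v *ᵥ ⇑(h.1.eigenvectorBasis i)) := by
      rw [mulVec_mulVec, hmul, hvv, smul_mulVec]
    rw [he, mulVec_smul, he, smul_smul, smul_smul] at h2
    have h3 : (h.1.eigenvalues i * h.1.eigenvalues i - (p:ℝ) * h.1.eigenvalues i)
        • (⇑(h.1.eigenvectorBasis i) : Fin p → ℝ) = 0 := by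
      rw [sub_smul, h2, sub_self]
    rcases smul_eq_zero.1 h3 with h4 | h4
    · rcases eq_or_ne (h.1.eigenvalues i) 0 with h5 | h5
      · rw [h5]; simp
      · have h6 : h.1.eigenvalues i * (h.1.eigenvalues i - p) = 0 := by linear_combination h4
        have h7 : h.1.eigenvalues i = p := by
          rcases mul_eq_zero.1 h6 with h8 | h8
          · exact absurd h8 h5
          · linarith
        rw [h7, eq_inv_mul_iff_mul_eq₀ (ne_of_gt hsppos), hsp]
    · exact absurd h4 hne
  have hspec := h.1.spectral_theorem
  rw [Unitary.conjStarAlgAut_apply] at hspec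
  have hdiag : diagonal (fun i => Real.sqrt (h.1.eigenvalues i))
      = (Real.sqrt p)⁻¹ • diagonal (RCLike.ofReal ∘ h.1.eigenvalues) := by
    ext i j
    by_cases hij : i = j
    · subst hij
      simp [key]
    · simp [diagonal_apply_ne _ hij]
  rw [hdiag, Matrix.mul_smul, Matrix.smul_mul, ← hspec]

end Aux

theorem rank_one_perfect_correlation_rate
    (p s : ℕ) (hp : 1 ≤ p) (hs1 : 1 ≤ s) (hs2 : s ≤ p)
    (v : Fin p → ℝ) (hv : l2norm v = Real.sqrt p) :
    (let P : (Fin p → ℝ) → Measure (Fin p → ℝ) := fun θ =>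
      gaussianPi θ (vecMulVec v v)
    let R : ℝ → ℝ := fun ε => minimaxRisk P
      {θ | ε ≤ l2norm θ ∧ sparsity θ ≤ s}
    (s < sparsity v → ∀ ε : ℝ, 0 < ε → R ε = 0) ∧
      (sparsity v ≤ s →
        ∀ η : ℝ, 0 < η → η < 1 → ∃ Cη cη : ℝ, 0 < Cη ∧ 0 < cη ∧
          (∀ C : ℝ, Cη < C → R (C * Real.sqrt p) ≤ η) ∧
          (∀ c : ℝ, 0 < c → c < cη → 1 - η ≤ R (c * Real.sqrt p)))) := by
  -- basic facts
  have hppos : (0:ℝ) < p := by exact_mod_cast Nat.pos_of_ne_zero (by omega)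
  have hsp : Real.sqrt p * Real.sqrt p = p := Real.mul_self_sqrt (le_of_lt hppos)
  have hsppos : (0:ℝ) < Real.sqrt p := Real.sqrt_pos.2 hppos
  have hsum : ∑ i, v i ^ 2 = p := by
    have h1 : Real.sqrt (∑ i, v i ^ 2) = Real.sqrt p := hv
    have h2 : (0:ℝ) ≤ ∑ i, v i ^ 2 := Finset.sum_nonneg fun i _ => sq_nonneg _
    calc ∑ i, v i ^ 2 = Real.sqrt (∑ i, v i ^ 2) ^ 2 := (Real.sq_sqrt h2).symm
      _ = Real.sqrt p ^ 2 := by rw [h1]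
      _ = p := Real.sq_sqrt (le_of_lt hppos)
  have hvv : v ⬝ᵥ v = (p:ℝ) := by
    rw [dotProduct]
    rw [← hsum]
    exact Finset.sum_congr rfl fun i _ => (sq (v i)).symm
  have hv0 : v ≠ 0 := by
    intro h
    have : (p:ℝ) = 0 := by rw [h] at hsum; simpa using hsum.symm
    linarith
  -- the coefficient function
  set Z : (Fin p → ℝ) → ℝ := fun x => (Real.sqrt p)⁻¹ * (v ⬝ᵥ x) with hZdef
  have hZ : Measurable Z := by
    have hZeq : Z = fun x => ∑ i, (Real.sqrt p)⁻¹ * (v i * x i) := by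
      funext x
      rw [hZdef]
      simp only [dotProduct, Finset.mul_sum]
    rw [hZeq]
    exact Finset.measurable_sum _ fun i _ => ((measurable_pi_apply i).const_mul _).const_mul _
  have hFmeas : ∀ θ : Fin p → ℝ, Measurable (fun x => θ + Z x • v) := by
    intro θ
    apply Measurable.add measurable_const
    exact hZ.smul_const v
  have hμprob : IsProbabilityMeasure (stdGaussianPi p) := by
    unfold stdGaussianPi; infer_instance
  have hF : ∀ θ : Fin p → ℝ, gaussianPi θ (vecMulVec v v)
      = (stdGaussianPi p).map (fun x => θ + Z x • v) := by
    intro θ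
    rw [gaussianPi, dif_pos (psd_vecMulVec v)]
    congr 1
    funext x
    congr 1
    rw [← sqrt_vecMulVec hp v hvv (psd_vecMulVec v), smul_mulVec, vecMulVec_mulVec', smul_smul, hZdef]
  have hmap : ∀ (θ : Fin p → ℝ) (E : Set (Fin p → ℝ)), MeasurableSet E →
      gaussianPi θ (vecMulVec v v) E = stdGaussianPi p {x | θ + Z x • v ∈ E} := by
    intro θ E hE
    rw [hF θ, Measure.map_apply (hFmeas θ) hE]
    rfl
  have hιcont : Continuous (fun t : ℝ => t • v) := by fun_prop
  have hιinj : Function.Injective (fun t : ℝ => t • v) := smul_left_injective ℝ hv0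
  have emb : MeasurableEmbedding (fun t : ℝ => t • v) := hιcont.measurableEmbedding hιinj
  have hl2smul : ∀ d : ℝ, l2norm (d • v) = |d| * Real.sqrt p := by
    intro d
    unfold l2norm
    have h1 : ∑ i, ((d • v) i) ^ 2 = d ^ 2 * ∑ i, v i ^ 2 := by
      rw [Finset.mul_sum]
      exact Finset.sum_congr rfl fun i _ => by
        simp only [Pi.smul_apply, smul_eq_mul]; ring
    rw [h1, hsum, Real.sqrt_mul (sq_nonneg d), Real.sqrt_sq_eq_abs]
  have hsparsmul : ∀ d : ℝ, d ≠ 0 → sparsity (d • v) = sparsity v := by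
    intro d hd
    unfold sparsity
    congr 1
    ext i
    simp only [Set.mem_setOf_eq, Pi.smul_apply, smul_eq_mul]
    constructor
    · intro h h'; exact h (by rw [h', mul_zero])
    · exact fun h => mul_ne_zero hd h
  have hdecomp : ∀ (θ : Fin p → ℝ) (t r : ℝ), θ + t • v = r • v → θ = (r - t) • v := by
    intro θ t r h
    have : θ = r • v - t • v := eq_sub_of_add_eq h
    rw [this, ← sub_smul]
  have hl2zero : l2norm (0 : Fin p → ℝ) = 0 := by
    unfold l2norm
    simp
  have hbdd : ∀ T : Set (Fin p → ℝ), BddBelow (Set.range fun φ : {f : (Fin p → ℝ) → Bool // Measurable f} =>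
      ((gaussianPi 0 (vecMulVec v v)) {x | φ.1 x = true}).toReal
        + ⨆ θ ∈ T, ((gaussianPi θ (vecMulVec v v)) {x | φ.1 x = false}).toReal) := by
    intro T
    refine ⟨0, ?_⟩
    rintro r ⟨ψ, rfl⟩
    exact add_nonneg ENNReal.toReal_nonneg
      (Real.iSup_nonneg fun θ => Real.iSup_nonneg fun _ => ENNReal.toReal_nonneg)
  refine ⟨?_, ?_⟩
  · -- Part (a)
    intro hlt ε hε
    have hL : MeasurableSet (Set.range fun t : ℝ => t • v) := emb.measurableSet_range
    set φ₀ : (Fin p → ℝ) → Bool := fun x =>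
      if x ∈ Set.range (fun t : ℝ => t • v) then false else true with hφ₀def
    have hφ₀meas : Measurable φ₀ := Measurable.ite hL measurable_const measurable_const
    have htrue : {x | φ₀ x = true} = (Set.range fun t : ℝ => t • v)ᶜ := by
      ext x
      simp only [Set.mem_setOf_eq, Set.mem_compl_iff, hφ₀def]
      by_cases h : x ∈ Set.range (fun t : ℝ => t • v)
      · rw [if_pos h]
        exact ⟨fun hc => absurd hc (by simp), fun hc => absurd h hc⟩
      · rw [if_neg h]
        exact iff_of_true rfl h
    have hfalse : {x | φ₀ x = false} = Set.range fun t : ℝ => t • v := by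
      ext x
      simp only [Set.mem_setOf_eq, hφ₀def]
      by_cases h : x ∈ Set.range (fun t : ℝ => t • v)
      · rw [if_pos h]
        exact iff_of_true rfl h
      · rw [if_neg h]
        exact iff_of_false (by simp) h
    apply le_antisymm
    · apply ciInf_le_of_le (hbdd _) ⟨φ₀, hφ₀meas⟩
      have e1 : (gaussianPi 0 (vecMulVec v v)) {x | φ₀ x = true} = 0 := by
        rw [htrue, hmap 0 _ hL.compl]
        have hset : {x | (0:Fin p → ℝ) + Z x • v ∈ (Set.range fun t : ℝ => t • v)ᶜ}
            = (∅ : Set (Fin p → ℝ)) := by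
          apply Set.eq_empty_iff_forall_notMem.2
          intro x hx
          exact hx ⟨Z x, by rw [zero_add]⟩
        rw [hset, measure_empty]
      have e2 : ∀ θ ∈ {θ : Fin p → ℝ | ε ≤ l2norm θ ∧ sparsity θ ≤ s},
          (gaussianPi θ (vecMulVec v v)) {x | φ₀ x = false} = 0 := by
        intro θ hθ
        obtain ⟨hθ1, hθ2⟩ := hθ
        rw [hfalse, hmap θ _ hL]
        have hset : {x | θ + Z x • v ∈ Set.range fun t : ℝ => t • v}
            = (∅ : Set (Fin p → ℝ)) := by
          apply Set.eq_empty_iff_forall_notMem.2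
          intro x hx
          obtain ⟨r, hr⟩ := hx
          have hθv : θ = (r - Z x) • v := hdecomp θ (Z x) r hr.symm
          rcases eq_or_ne (r - Z x) 0 with h0 | h0
          · rw [h0, zero_smul] at hθv
            rw [hθv, hl2zero] at hθ1
            linarith
          · have heq : sparsity θ = sparsity v := by rw [hθv]; exact hsparsmul _ h0
            omega
        rw [hset, measure_empty]
      rw [e1]
      simp only [ENNReal.toReal_zero, zero_add]
      apply Real.iSup_le _ le_rfl
      intro θ
      apply Real.iSup_le _ le_rfl
      intro hθ
      rw [e2 θ hθ]
      simp
    · haveI : Nonempty {f : (Fin p → ℝ) → Bool // Measurable f} :=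
        ⟨⟨fun _ => true, measurable_const⟩⟩
      apply le_ciInf
      intro φ
      exact add_nonneg ENNReal.toReal_nonneg
        (Real.iSup_nonneg fun θ => Real.iSup_nonneg fun _ => ENNReal.toReal_nonneg)
  · -- Part (b)
    intro hle η hη0 hη1
    haveI : Nonempty {f : (Fin p → ℝ) → Bool // Measurable f} :=
      ⟨⟨fun _ => true, measurable_const⟩⟩
    -- tail bound for Z under the standard Gaussian
    have hAmeas : ∀ n : ℕ, MeasurableSet {x : Fin p → ℝ | (n:ℝ) ≤ |Z x|} :=
      fun n => measurableSet_le measurable_const hZ.abs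
    have hanti : Antitone (fun n : ℕ => {x : Fin p → ℝ | (n:ℝ) ≤ |Z x|}) := by
      intro a b hab x hx
      simp only [Set.mem_setOf_eq] at hx ⊢
      calc (a:ℝ) ≤ (b:ℝ) := by exact_mod_cast hab
        _ ≤ |Z x| := hx
    have hint : ⋂ n : ℕ, {x : Fin p → ℝ | (n:ℝ) ≤ |Z x|} = ∅ := by
      apply Set.eq_empty_iff_forall_notMem.2
      intro x hx
      obtain ⟨n, hn⟩ := exists_nat_gt |Z x|
      exact absurd (Set.mem_iInter.1 hx n) (not_le.2 hn)
    have htend := tendsto_measure_iInter_atTop (μ := stdGaussianPi p)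
      (fun n => (hAmeas n).nullMeasurableSet) hanti ⟨0, measure_ne_top _ _⟩
    rw [hint, measure_empty] at htend
    have hev := htend.eventually_lt_const
      (show (0:ℝ≥0∞) < ENNReal.ofReal (η/2) from ENNReal.ofReal_pos.2 (by linarith))
    obtain ⟨M, hM⟩ := hev.exists
    simp only [Function.comp] at hM
    set K := ∑ i, |v i| with hKdef
    have hK0 : 0 ≤ K := Finset.sum_nonneg fun i _ => abs_nonneg _
    refine ⟨2*((M:ℝ)+1), η * Real.sqrt p / (K+1), by positivity, by positivity, ?_, ?_⟩
    · -- upper bound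
      intro C hC
      have hM0 : (0:ℝ) ≤ M := Nat.cast_nonneg M
      have hC0 : 0 < C := by linarith
      have hMC : (M:ℝ) ≤ C/2 := by linarith
      set G := (fun t : ℝ => t • v) '' Set.Ioo (-(C/2)) (C/2) with hGdef
      have hG : MeasurableSet G := emb.measurableSet_image.2 measurableSet_Ioo
      set φC : (Fin p → ℝ) → Bool := fun x => if x ∈ G then false else true with hφdef
      have hφmeas : Measurable φC := Measurable.ite hG measurable_const measurable_const
      have htrue : {x | φC x = true} = Gᶜ := by
        ext x
        simp only [Set.mem_setOf_eq, Set.mem_compl_iff, hφdef]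
        by_cases h : x ∈ G
        · rw [if_pos h]
          exact ⟨fun hc => absurd hc (by simp), fun hc => absurd h hc⟩
        · rw [if_neg h]
          exact iff_of_true rfl h
      have hfalse : {x | φC x = false} = G := by
        ext x
        simp only [Set.mem_setOf_eq, hφdef]
        by_cases h : x ∈ G
        · rw [if_pos h]
          exact iff_of_true rfl h
        · rw [if_neg h]
          exact iff_of_false (by simp) h
      refine le_trans (ciInf_le (hbdd _) ⟨φC, hφmeas⟩) ?_
      have bound1 : ((gaussianPi 0 (vecMulVec v v)) {x | φC x = true}).toReal ≤ η/2 := by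
        rw [htrue, hmap 0 _ hG.compl]
        have hsub : {x | (0:Fin p → ℝ) + Z x • v ∈ Gᶜ} ⊆ {x : Fin p → ℝ | (M:ℝ) ≤ |Z x|} := by
          intro x hx
          simp only [Set.mem_setOf_eq]
          by_contra hc
          push_neg at hc
          apply hx
          have habs : |Z x| < C/2 := lt_of_lt_of_le hc hMC
          exact ⟨Z x, (abs_lt.1 habs : _), by rw [zero_add]⟩
        exact ENNReal.toReal_le_of_le_ofReal (by linarith)
          (le_trans (measure_mono hsub) (le_of_lt hM))
      have bound2 : (⨆ θ ∈ {θ : Fin p → ℝ | C * Real.sqrt p ≤ l2norm θ ∧ sparsity θ ≤ s},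
          ((gaussianPi θ (vecMulVec v v)) {x | φC x = false}).toReal) ≤ η/2 := by
        apply Real.iSup_le _ (by linarith)
        intro θ
        apply Real.iSup_le _ (by linarith)
        intro hθ
        obtain ⟨hθ1, hθ2⟩ := hθ
        rw [hfalse, hmap θ _ hG]
        have hsub : {x | θ + Z x • v ∈ G} ⊆ {x : Fin p → ℝ | (M:ℝ) ≤ |Z x|} := by
          intro x hx
          obtain ⟨r, hrI, hr⟩ := hx
          have hθv : θ = (r - Z x) • v := hdecomp θ (Z x) r hr.symm
          rw [hθv, hl2smul] at hθ1
          have h2 : C ≤ |r - Z x| := le_of_mul_le_mul_right (by linarith) hsppos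
          have h3 : |r| < C/2 := abs_lt.2 ⟨hrI.1, hrI.2⟩
          have h4 : |r - Z x| - |r| ≤ |Z x| := by
            have h5 := abs_sub_abs_le_abs_sub (r - Z x) r
            have h6 : (r - Z x) - r = -(Z x) := by ring
            rw [h6, abs_neg] at h5
            linarith
          simp only [Set.mem_setOf_eq]
          calc (M:ℝ) ≤ C/2 := hMC
            _ ≤ |Z x| := by linarith
        exact ENNReal.toReal_le_of_le_ofReal (by linarith)
          (le_trans (measure_mono hsub) (le_of_lt hM))
      calc ((gaussianPi 0 (vecMulVec v v)) {x | φC x = true}).toReal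
            + ⨆ θ ∈ {θ : Fin p → ℝ | C * Real.sqrt p ≤ l2norm θ ∧ sparsity θ ≤ s},
              ((gaussianPi θ (vecMulVec v v)) {x | φC x = false}).toReal
          ≤ η/2 + η/2 := add_le_add bound1 bound2
        _ = η := by ring
    · -- lower bound
      intro c hc0 hccη
      apply le_ciInf
      intro φ
      set w : Fin p → ℝ := (c * (Real.sqrt p)⁻¹) • v with hwdef
      have hsne : Real.sqrt p ≠ 0 := ne_of_gt hsppos
      have hZw : ∀ x, Z (x + w) = Z x + c := by
        intro x
        rw [hZdef]
        simp only
        rw [dotProduct_add, hwdef, dotProduct_smul, smul_eq_mul, hvv]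
        field_simp
        linear_combination (-c) * hsp
      have hθ₀mem : (c • v) ∈ {θ : Fin p → ℝ | c * Real.sqrt p ≤ l2norm θ ∧ sparsity θ ≤ s} := by
        constructor
        · rw [hl2smul, abs_of_pos hc0]
        · rw [hsparsmul c (ne_of_gt hc0)]; exact hle
      have hEt : MeasurableSet {x : Fin p → ℝ | φ.1 x = true} :=
        φ.2 (measurableSet_singleton true)
      have hEf : MeasurableSet {x : Fin p → ℝ | φ.1 x = false} :=
        φ.2 (measurableSet_singleton false)
      set A : Set (Fin p → ℝ) := {x | φ.1 ((0:Fin p → ℝ) + Z x • v) = true} with hAdef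
      set B : Set (Fin p → ℝ) := {x | φ.1 ((0:Fin p → ℝ) + Z x • v) = false} with hBdef
      have hAm : MeasurableSet A := (hFmeas 0) hEt
      have hBm : MeasurableSet B := (hFmeas 0) hEf
      have hBcompl : B = Aᶜ := by
        ext x
        simp [hAdef, hBdef]
      have hABone : stdGaussianPi p A + stdGaussianPi p B = 1 := by
        rw [hBcompl, measure_add_measure_compl hAm, measure_univ]
      have hshift := stdGaussianPi_shift p w B hBm
      -- identify the sets appearing in the risk
      have hPA : (gaussianPi 0 (vecMulVec v v)) {x | φ.1 x = true} = stdGaussianPi p A := by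
        rw [hmap 0 _ hEt]
        rfl
      have hDeq : {x | c • v + Z x • v ∈ {x | φ.1 x = false}} = {x | x + w ∈ B} := by
        ext x
        simp only [Set.mem_setOf_eq, hBdef]
        rw [hZw x, zero_add, add_smul, add_comm (Z x • v) (c • v)]
      have hPD : (gaussianPi (c • v) (vecMulVec v v)) {x | φ.1 x = false}
          = stdGaussianPi p {x | x + w ∈ B} := by
        rw [hmap (c • v) _ hEf, hDeq]
      -- sum of |w i|
      have hwsum : ∑ i, |w i| = (c * (Real.sqrt p)⁻¹) * K := by
        rw [hKdef, Finset.mul_sum]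
        apply Finset.sum_congr rfl
        intro i _
        rw [hwdef]
        simp only [Pi.smul_apply, smul_eq_mul, abs_mul]
        rw [abs_of_pos hc0, abs_of_pos (show (0:ℝ) < (Real.sqrt p)⁻¹ by positivity)]
      have hSig : ∑ i, |w i| ≤ η := by
        rw [hwsum]
        have h5 : c * (K+1) < η * Real.sqrt p := (lt_div_iff₀ (by positivity)).1 hccη
        have h6 : c * K < η * Real.sqrt p := by nlinarith
        calc c * (Real.sqrt p)⁻¹ * K = (c * K) * (Real.sqrt p)⁻¹ := by ring
          _ ≤ (η * Real.sqrt p) * (Real.sqrt p)⁻¹ := by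
              apply mul_le_mul_of_nonneg_right (le_of_lt h6) (by positivity)
          _ = η := by field_simp
      -- main inequality in ℝ≥0∞
      have h1le : (1:ℝ≥0∞) ≤ stdGaussianPi p A
          + (stdGaussianPi p {x | x + w ∈ B} + ENNReal.ofReal (∑ i, |w i|)) := by
        calc (1:ℝ≥0∞) = stdGaussianPi p A + stdGaussianPi p B := hABone.symm
          _ ≤ _ := add_le_add_right hshift _
      have hfin : stdGaussianPi p A
          + (stdGaussianPi p {x | x + w ∈ B} + ENNReal.ofReal (∑ i, |w i|)) ≠ ⊤ :=
        ENNReal.add_ne_top.2 ⟨measure_ne_top _ _,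
          ENNReal.add_ne_top.2 ⟨measure_ne_top _ _, ENNReal.ofReal_ne_top⟩⟩
      have h2 := ENNReal.toReal_mono hfin h1le
      rw [ENNReal.toReal_one,
        ENNReal.toReal_add (measure_ne_top _ _)
          (ENNReal.add_ne_top.2 ⟨measure_ne_top _ _, ENNReal.ofReal_ne_top⟩),
        ENNReal.toReal_add (measure_ne_top _ _) ENNReal.ofReal_ne_top,
        ENNReal.toReal_ofReal (Finset.sum_nonneg fun i _ => abs_nonneg _)] at h2
      -- bound the sup from below by the value at θ₀ = c • v
      have hbddsup : BddAbove (Set.range fun θ : Fin p → ℝ =>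
          ⨆ _ : θ ∈ {θ : Fin p → ℝ | c * Real.sqrt p ≤ l2norm θ ∧ sparsity θ ≤ s},
            ((gaussianPi θ (vecMulVec v v)) {x | φ.1 x = false}).toReal) := by
        refine ⟨1, ?_⟩
        rintro r ⟨θ, rfl⟩
        apply Real.iSup_le _ zero_le_one
        intro _
        rw [hmap θ _ hEf]
        exact ENNReal.toReal_le_of_le_ofReal zero_le_one (by simpa using prob_le_one)
      have hsupge : ((gaussianPi (c • v) (vecMulVec v v)) {x | φ.1 x = false}).toReal
          ≤ ⨆ θ ∈ {θ : Fin p → ℝ | c * Real.sqrt p ≤ l2norm θ ∧ sparsity θ ≤ s},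
            ((gaussianPi θ (vecMulVec v v)) {x | φ.1 x = false}).toReal := by
        have hconst : (⨆ _ : (c • v) ∈ {θ : Fin p → ℝ | c * Real.sqrt p ≤ l2norm θ
            ∧ sparsity θ ≤ s},
            ((gaussianPi (c • v) (vecMulVec v v)) {x | φ.1 x = false}).toReal)
            = ((gaussianPi (c • v) (vecMulVec v v)) {x | φ.1 x = false}).toReal := by
          haveI : Nonempty ((c • v) ∈ {θ : Fin p → ℝ | c * Real.sqrt p ≤ l2norm θ
            ∧ sparsity θ ≤ s} : Prop) := ⟨hθ₀mem⟩
          exact ciSup_const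
        rw [← hconst]
        exact le_ciSup hbddsup (c • v)
      calc 1 - η ≤ (stdGaussianPi p A).toReal
            + (stdGaussianPi p {x | x + w ∈ B}).toReal := by linarith
        _ = ((gaussianPi 0 (vecMulVec v v)) {x | φ.1 x = true}).toReal
            + ((gaussianPi (c • v) (vecMulVec v v)) {x | φ.1 x = false}).toReal := by
            rw [hPA, hPD]
        _ ≤ ((gaussianPi 0 (vecMulVec v v)) {x | φ.1 x = true}).toReal
            + ⨆ θ ∈ {θ : Fin p → ℝ | c * Real.sqrt p ≤ l2norm θ ∧ sparsity θ ≤ s},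
              ((gaussianPi θ (vecMulVec v v)) {x | φ.1 x = false}).toReal :=
            add_le_add_right hsupge _

end
end
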